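/- Define ω_k(r) recursively by ω_0(r)=1, ω_{k+1}(r) = ∫_r^∞ ∫_s^∞ (e^{-t}/t) ω_k(t) dt ds. Then for all k ≥ 1 and r ≥ 1, the derivative satisfies −e^{-kr}/(k!(k−1)!) < ω_k'(r) < 0. -/

import Mathlib

open MeasureTheory Real Set Filter
open scoped Topology

lemma integral_exp_neg_mul_Ioi' {b : ℝ} (hb : 0 < b) (a : ℝ) :
    ∫ x in Set.Ioi a, Real.exp (-b * x) = Real.exp (-b * a) / b := by
  have hderiv : ∀ x ∈ Set.Ici a, HasDerivAt (fun x => -(Real.exp (-b * x) / b))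
      (Real.exp (-b * x)) x := by
    intro x _
    have := (((hasDerivAt_id x).const_mul (-b)).exp.div_const b).neg
    exact this.congr_deriv (by simp [id]; field_simp)
  have htend : Tendsto (fun x => -(Real.exp (-b * x) / b)) atTop (𝓝 (-(0 / b))) := by
    refine Tendsto.neg (Tendsto.div_const ?_ _)
    exact tendsto_exp_atBot.comp (tendsto_id.const_mul_atTop_of_neg (neg_neg_iff_pos.2 hb))
  have := integral_Ioi_of_hasDerivAt_of_tendsto' hderiv (exp_neg_integrableOn_Ioi a hb) htend
  rw [this]; ring

lemma integral_pos_Ioi' {f : ℝ → ℝ} {a : ℝ} (hf : IntegrableOn f (Set.Ioi a))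
    (hpos : ∀ t ∈ Set.Ioi a, 0 < f t) : 0 < ∫ t in Set.Ioi a, f t := by
  rw [setIntegral_pos_iff_support_of_nonneg_ae
    ((ae_restrict_iff' measurableSet_Ioi).2 (ae_of_all _ fun t ht => (hpos t ht).le)) hf]
  have hsub : Set.Ioi a ⊆ Function.support f ∩ Set.Ioi a :=
    fun t ht => ⟨(hpos t ht).ne', ht⟩
  calc (0:ENNReal) < volume (Set.Ioi a) := by simp [Real.volume_Ioi]
    _ ≤ _ := measure_mono hsub

lemma hasDerivAt_integral_Ioi' {f : ℝ → ℝ} {a x : ℝ} (hax : a < x)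
    (hf : IntegrableOn f (Set.Ioi a)) (hc : ContinuousOn f (Set.Ioi a)) :
    HasDerivAt (fun y => ∫ t in Set.Ioi y, f t) (-f x) x := by
  have key : ∀ y ∈ Set.Ioi a, ∫ t in Set.Ioi y, f t
      = (∫ t in Set.Ioi a, f t) - ∫ t in a..y, f t := by
    intro y hy
    rw [intervalIntegral.integral_of_le (le_of_lt hy), eq_sub_iff_add_eq]
    rw [← setIntegral_union Set.Ioc_disjoint_Ioi_same.symm measurableSet_Ioc
      (hf.mono_set (Set.Ioi_subset_Ioi (le_of_lt hy))) (hf.mono_set Set.Ioc_subset_Ioi_self)]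
    rw [Set.union_comm, Set.Ioc_union_Ioi_eq_Ioi (le_of_lt hy)]
  have hii : IntervalIntegrable f volume a x :=
    (intervalIntegrable_iff_integrableOn_Ioc_of_le hax.le).2
      (hf.mono_set Set.Ioc_subset_Ioi_self)
  have hmeas : StronglyMeasurableAtFilter f (𝓝 x) :=
    hc.stronglyMeasurableAtFilter isOpen_Ioi x hax
  have hcx : ContinuousAt f x := hc.continuousAt (Ioi_mem_nhds hax)
  have hd := ((intervalIntegral.integral_hasDerivAt_right hii hmeas hcx).const_sub
    (∫ t in Set.Ioi a, f t))
  exact hd.congr_of_eventuallyEq (by filter_upwards [Ioi_mem_nhds hax] with y hy using key y hy)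

lemma max_inv_mono {a t : ℝ} (ha : 0 < a) (hat : a < t) : max 1 t⁻¹ ≤ max 1 a⁻¹ :=
  max_le_max le_rfl (by rw [inv_le_inv₀ (ha.trans hat) ha] at *; exact hat.le)

lemma outer (v : ℝ → ℝ) (m : ℕ) (L d : ℝ) (hL : 0 < L) (hd : 0 < d)
    (hvcont : ContinuousOn v (Set.Ioi 0))
    (hv : ∀ s, 0 < s → 0 < v s ∧ v s ≤ (max 1 s⁻¹)^m * Real.exp (-L*s) * d) :
    (∀ a, 0 < a → IntegrableOn v (Set.Ioi a)) ∧
    (∀ x, 0 < x → HasDerivAt (fun y => ∫ t in Set.Ioi y, v t) (-(v x)) x) ∧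
    (∀ r, 0 < r → 0 < (∫ t in Set.Ioi r, v t) ∧
        (∫ t in Set.Ioi r, v t) ≤ (max 1 r⁻¹)^m * Real.exp (-L*r) * (d/L)) := by
  have hM : ∀ a : ℝ, (1:ℝ) ≤ max 1 a⁻¹ := fun a => le_max_left _ _
  have hbnd : ∀ a, 0 < a → ∀ t ∈ Set.Ioi a,
      v t ≤ (max 1 a⁻¹)^m * d * Real.exp (-L*t) := by
    intro a ha t ht
    have ht' : 0 < t := ha.trans ht
    have h2 := (hv t ht').2
    have h3 : (max 1 t⁻¹)^m ≤ (max 1 a⁻¹)^m :=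
      pow_le_pow_left₀ (le_trans zero_le_one (hM t)) (max_inv_mono ha ht) m
    calc v t ≤ (max 1 t⁻¹)^m * Real.exp (-L*t) * d := h2
      _ ≤ (max 1 a⁻¹)^m * Real.exp (-L*t) * d := by gcongr
      _ = (max 1 a⁻¹)^m * d * Real.exp (-L*t) := by ring
  have hint : ∀ a, 0 < a → IntegrableOn v (Set.Ioi a) := by
    intro a ha
    refine Integrable.mono' (((exp_neg_integrableOn_Ioi a hL).const_mul
      ((max 1 a⁻¹)^m * d))) ?_ ?_
    · exact ((hvcont.mono (Set.Ioi_subset_Ioi ha.le)).aestronglyMeasurable measurableSet_Ioi)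
    · refine (ae_restrict_iff' measurableSet_Ioi).2 (ae_of_all _ fun t ht => ?_)
      rw [Real.norm_of_nonneg (hv t (ha.trans ht)).1.le]
      exact hbnd a ha t ht
  refine ⟨hint, fun x hx => ?_, fun r hr => ?_⟩
  · exact hasDerivAt_integral_Ioi' (half_lt_self hx) (hint _ (half_pos hx))
      (hvcont.mono (Set.Ioi_subset_Ioi (half_pos hx).le))
  · constructor
    · exact integral_pos_Ioi' (hint r hr) (fun t ht => (hv t (hr.trans ht)).1)
    · calc (∫ t in Set.Ioi r, v t)
          ≤ ∫ t in Set.Ioi r, (max 1 r⁻¹)^m * d * Real.exp (-L*t) := by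
            refine setIntegral_mono_on (hint r hr)
              (((exp_neg_integrableOn_Ioi r hL).const_mul _)) measurableSet_Ioi
              (fun t ht => hbnd r hr t ht)
        _ = (max 1 r⁻¹)^m * Real.exp (-L*r) * (d/L) := by
            rw [MeasureTheory.integral_const_mul, integral_exp_neg_mul_Ioi' hL]
            ring

lemma shape (u : ℝ → ℝ) (n : ℕ) (K c : ℝ) (hK : 0 ≤ K) (hc : 0 < c)
    (hucont : ContinuousOn u (Set.Ioi 0))
    (hu : ∀ t, 0 < t → 0 < u t ∧ u t ≤ (max 1 t⁻¹)^n * Real.exp (-K*t) * c) :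
    ContinuousOn (fun t => Real.exp (-t)/t * u t) (Set.Ioi 0) ∧
    ∀ t, 0 < t → 0 < Real.exp (-t)/t * u t ∧
      Real.exp (-t)/t * u t ≤ (max 1 t⁻¹)^(n+1) * Real.exp (-(K+1)*t) * c := by
  constructor
  · exact (((Real.continuous_exp.comp continuous_neg).continuousOn.div
      continuousOn_id (fun t ht => ne_of_gt ht)).mul hucont)
  · intro t ht
    have h1 : 0 < Real.exp (-t) / t := div_pos (Real.exp_pos _) ht
    refine ⟨mul_pos h1 (hu t ht).1, ?_⟩
    have he : Real.exp (-(K+1)*t) = Real.exp (-t) * Real.exp (-K*t) := by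
      rw [← Real.exp_add]; ring_nf
    calc Real.exp (-t)/t * u t = t⁻¹ * (Real.exp (-t) * u t) := by ring
      _ ≤ (max 1 t⁻¹) * (Real.exp (-t) * ((max 1 t⁻¹)^n * Real.exp (-K*t) * c)) := by
          refine mul_le_mul (le_max_right _ _)
            (mul_le_mul_of_nonneg_left (hu t ht).2 (Real.exp_pos _).le)
            (mul_nonneg (Real.exp_pos _).le (hu t ht).1.le)
            (le_trans zero_le_one (le_max_left _ _))
      _ = (max 1 t⁻¹)^(n+1) * Real.exp (-(K+1)*t) * c := by rw [he]; ring

lemma omega_props (ω : ℕ → ℝ → ℝ) (hω0 : ∀ r, ω 0 r = 1)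
    (hrec : ∀ k : ℕ, ∀ r : ℝ, 0 < r → ω (k + 1) r =
      ∫ s in Set.Ioi r, ∫ t in Set.Ioi s, Real.exp (-t) / t * ω k t) :
    ∀ k : ℕ, ContinuousOn (ω k) (Set.Ioi 0) ∧
      ∀ r, 0 < r → 0 < ω k r ∧
        ω k r ≤ (max 1 r⁻¹)^(2*k) * Real.exp (-(k:ℝ)*r) * (((k.factorial:ℝ))^2)⁻¹ := by
  intro k
  induction k with
  | zero =>
    have h0 : ω 0 = fun _ => 1 := funext hω0
    rw [h0]
    exact ⟨continuousOn_const, fun r _ => by norm_num⟩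
  | succ k ih =>
    obtain ⟨hcont, hbnd⟩ := ih
    set c := (((k.factorial:ℝ))^2)⁻¹ with hcdef
    have hc : 0 < c := by positivity
    obtain ⟨hHcont, hH⟩ := shape (ω k) (2*k) (k:ℝ) c (by positivity) hc hcont hbnd
    obtain ⟨hHint, hgderiv, hgfacts⟩ := outer _ (2*k+1) ((k:ℝ)+1) c (by positivity) hc hHcont hH
    set g := fun y => ∫ t in Set.Ioi y, Real.exp (-t)/t * ω k t with hgdef
    have hgcont : ContinuousOn g (Set.Ioi 0) :=
      fun x hx => (hgderiv x hx).continuousAt.continuousWithinAt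
    obtain ⟨hgint, hFderiv, hFfacts⟩ := outer g (2*k+1) ((k:ℝ)+1) (c/((k:ℝ)+1))
      (by positivity) (by positivity) hgcont hgfacts
    have heq : ∀ r, 0 < r → ω (k+1) r = ∫ s in Set.Ioi r, g s := hrec k
    constructor
    · intro x hx
      refine ContinuousAt.continuousWithinAt ?_
      refine (hFderiv x hx).continuousAt.congr ?_
      filter_upwards [Ioi_mem_nhds hx] with y hy using (heq y hy).symm
    · intro r hr
      obtain ⟨hp, hb⟩ := hFfacts r hr
      rw [heq r hr]
      refine ⟨hp, le_trans hb ?_⟩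
      have hfac : ((((k+1).factorial:ℝ))^2)⁻¹ = c/((k:ℝ)+1)/((k:ℝ)+1) := by
        rw [Nat.factorial_succ, hcdef]
        push_cast
        field_simp
      have hcast : (-(((k:ℕ)+1:ℕ):ℝ))*r = -((k:ℝ)+1)*r := by push_cast; ring
      rw [hcast, hfac]
      have h1 : (1:ℝ) ≤ max 1 r⁻¹ := le_max_left _ _
      have hpow : (max 1 r⁻¹)^(2*k+1) ≤ (max 1 r⁻¹)^(2*(k+1)) :=
        pow_le_pow_right₀ h1 (by omega)
      have : (0:ℝ) < c/((k:ℝ)+1)/((k:ℝ)+1) := by positivity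
      calc (max 1 r⁻¹)^(2*k+1) * Real.exp (-((k:ℝ)+1)*r) * (c/((k:ℝ)+1)/((k:ℝ)+1))
          ≤ (max 1 r⁻¹)^(2*(k+1)) * Real.exp (-((k:ℝ)+1)*r) * (c/((k:ℝ)+1)/((k:ℝ)+1)) := by
            gcongr
        _ = _ := by ring

theorem omega_deriv_bounds (ω : ℕ → ℝ → ℝ) (hω0 : ∀ r, ω 0 r = 1)
    (hrec : ∀ k : ℕ, ∀ r : ℝ, 0 < r → ω (k + 1) r =
      ∫ s in Set.Ioi r, ∫ t in Set.Ioi s, Real.exp (-t) / t * ω k t) :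
    ∀ k : ℕ, 1 ≤ k → ∀ r : ℝ, 1 ≤ r →
      -Real.exp (-(k : ℝ) * r) / ((Nat.factorial k : ℝ) * (Nat.factorial (k - 1) : ℝ)) <
          deriv (ω k) r ∧ deriv (ω k) r < 0 := by
  intro k hk r hr
  obtain ⟨m, rfl⟩ : ∃ m, k = m + 1 := ⟨k - 1, (Nat.succ_pred_eq_of_pos hk).symm⟩
  have hr0 : (0:ℝ) < r := lt_of_lt_of_le one_pos hr
  obtain ⟨hcont, hbnd⟩ := omega_props ω hω0 hrec m
  set c := (((m.factorial:ℝ))^2)⁻¹ with hcdef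
  have hc : 0 < c := by positivity
  obtain ⟨hHcont, hH⟩ := shape (ω m) (2*m) (m:ℝ) c (by positivity) hc hcont hbnd
  obtain ⟨hHint, hgderiv, hgfacts⟩ := outer _ (2*m+1) ((m:ℝ)+1) c (by positivity) hc hHcont hH
  set g := fun y => ∫ t in Set.Ioi y, Real.exp (-t)/t * ω m t with hgdef
  have hgcont : ContinuousOn g (Set.Ioi 0) :=
    fun x hx => (hgderiv x hx).continuousAt.continuousWithinAt
  obtain ⟨hgint, hFderiv, hFfacts⟩ := outer g (2*m+1) ((m:ℝ)+1) (c/((m:ℝ)+1))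
    (by positivity) (by positivity) hgcont hgfacts
  -- derivative of ω (m+1) at r
  have hd : HasDerivAt (ω (m+1)) (-(g r)) r := by
    refine (hFderiv r hr0).congr_of_eventuallyEq ?_
    filter_upwards [Ioi_mem_nhds hr0] with y hy using hrec m y hy
  rw [hd.deriv]
  have hgpos : 0 < g r := (hgfacts r hr0).1
  -- strict upper bound on g r
  have hφint : IntegrableOn (fun t => Real.exp (-((m:ℝ)+1)*t) * c) (Set.Ioi r) :=
    (exp_neg_integrableOn_Ioi r (by positivity)).mul_const c
  have hdiffpos : ∀ t ∈ Set.Ioi r,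
      0 < Real.exp (-((m:ℝ)+1)*t) * c - Real.exp (-t)/t * ω m t := by
    intro t ht
    have ht1 : 1 < t := lt_of_le_of_lt hr ht
    have ht0 : 0 < t := lt_trans one_pos ht1
    have hmax : max 1 t⁻¹ = 1 := max_eq_left (by
      rw [inv_le_one_iff₀]; right; exact ht1.le)
    have h1 : ω m t ≤ Real.exp (-(m:ℝ)*t) * c := by
      have := (hbnd t ht0).2
      rwa [hmax, one_pow, one_mul] at this
    have h2 : Real.exp (-t)/t < Real.exp (-t) := div_lt_self (Real.exp_pos _) ht1
    have h3 : 0 < ω m t := (hbnd t ht0).1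
    have hstep : Real.exp (-t)/t * ω m t < Real.exp (-t) * (Real.exp (-(m:ℝ)*t) * c) := by
      calc Real.exp (-t)/t * ω m t ≤ Real.exp (-t)/t * (Real.exp (-(m:ℝ)*t) * c) := by
            gcongr
        _ < Real.exp (-t) * (Real.exp (-(m:ℝ)*t) * c) :=
            mul_lt_mul_of_pos_right h2 (by positivity)
    have he : Real.exp (-((m:ℝ)+1)*t) = Real.exp (-t) * Real.exp (-(m:ℝ)*t) := by
      rw [← Real.exp_add]; ring_nf
    rw [sub_pos, he]
    linarith [hstep]
  have hstrict : g r < Real.exp (-((m:ℝ)+1)*r) * c / ((m:ℝ)+1) := by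
    have hlt : 0 < ∫ t in Set.Ioi r,
        (Real.exp (-((m:ℝ)+1)*t) * c - Real.exp (-t)/t * ω m t) :=
      integral_pos_Ioi' (hφint.sub (hHint r hr0)) hdiffpos
    rw [integral_sub hφint (hHint r hr0)] at hlt
    have hφval : ∫ t in Set.Ioi r, Real.exp (-((m:ℝ)+1)*t) * c
        = Real.exp (-((m:ℝ)+1)*r) * c / ((m:ℝ)+1) := by
      rw [MeasureTheory.integral_mul_const, integral_exp_neg_mul_Ioi' (by positivity)]
      ring
    rw [hφval] at hlt
    have : g r = ∫ t in Set.Ioi r, Real.exp (-t)/t * ω m t := rfl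
    rw [this]
    linarith
  constructor
  · have hcast : (-(((m:ℕ)+1:ℕ):ℝ))*r = -((m:ℝ)+1)*r := by push_cast; ring
    have hfac : ((((m+1).factorial:ℝ)) * (((m+1-1).factorial:ℝ)))⁻¹ = c/((m:ℝ)+1) := by
      simp only [Nat.add_sub_cancel, Nat.factorial_succ, hcdef]
      push_cast
      field_simp
    rw [neg_div, neg_lt_neg_iff]
    have hkey : Real.exp (-(((m+1:ℕ)):ℝ) * r) / (((m+1).factorial:ℝ) * ((m+1-1).factorial:ℝ))
        = Real.exp (-((m:ℝ)+1)*r) * c / ((m:ℝ)+1) := by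
      rw [div_eq_mul_inv, hfac, hcast]; ring
    rw [hkey]
    exact hstrict
  · simpa using hgpos
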